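/- Let z_1,...,z_d be distinct nonzero complex numbers with z_1^n = z_2^n = ... = z_d^n, where n > d ≥ 1. Then for every m ≥ 0, H_{m+n}(z_1,...,z_d) = z_1^n · H_m(z_1,...,z_d), where H denotes the complete homogeneous symmetric polynomial. -/

import Mathlib

noncomputable section

/-- Complete homogeneous symmetric polynomial of degree `m` in `d` variables. -/
def Hpoly (d m : ℕ) (z : Fin d → ℂ) : ℂ :=
  ∑ α ∈ Finset.Nat.antidiagonalTuple d m, ∏ i, z i ^ α i

open Finset Polynomial

/-- Nodal weights. -/
def Wt (d : ℕ) (z : Fin d → ℂ) (i : Fin d) : ℂ :=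
  ∏ j ∈ Finset.univ.erase i, (z i - z j)⁻¹

lemma Wt_eq_nodalWeight (d : ℕ) (z : Fin d → ℂ) (i : Fin d) :
    Wt d z i = Lagrange.nodalWeight Finset.univ z i := rfl

lemma basis_coeff (d : ℕ) (hd : 0 < d) (z : Fin d → ℂ) (hinj : Function.Injective z) (i : Fin d) :
    (Lagrange.basis Finset.univ z i).coeff (d - 1) = Wt d z i := by
  have hS : Set.InjOn z (Finset.univ : Finset (Fin d)) := Function.Injective.injOn hinj
  have hnd : (Lagrange.basis Finset.univ z i).natDegree = d - 1 := by
    rw [Lagrange.natDegree_basis hS (Finset.mem_univ i), Finset.card_univ, Fintype.card_fin]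
  rw [← hnd, ← Polynomial.leadingCoeff]
  rw [Lagrange.basis, Polynomial.leadingCoeff_prod]
  rw [Wt]
  refine Finset.prod_congr rfl fun j hj => ?_
  have hij : z i ≠ z j := fun h => (Finset.mem_erase.mp hj).1.symm (hinj h)
  rw [Lagrange.basisDivisor, Polynomial.leadingCoeff_mul, Polynomial.leadingCoeff_C,
    (Polynomial.monic_X_sub_C (z j)).leadingCoeff, mul_one]

lemma Slem (d : ℕ) (z : Fin d → ℂ) (hinj : Function.Injective z) (r : ℕ) (hr : r < d) :
    ∑ i, z i ^ r * Wt d z i = if r = d - 1 then 1 else 0 := by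
  have hS : Set.InjOn z (Finset.univ : Finset (Fin d)) := Function.Injective.injOn hinj
  have hcard : #(Finset.univ : Finset (Fin d)) = d := by simp
  have h1 : (Polynomial.X ^ r : ℂ[X]) = Lagrange.interpolate Finset.univ z (fun i => z i ^ r) := by
    apply Lagrange.eq_interpolate_of_eval_eq _ hS
    · rw [Polynomial.degree_X_pow, hcard]; exact_mod_cast hr
    · intro i _; simp
  have h2 := congrArg (fun p => Polynomial.coeff p (d - 1)) h1
  simp only [Lagrange.interpolate_apply, Polynomial.coeff_X_pow,
    Polynomial.finset_sum_coeff, Polynomial.coeff_C_mul] at h2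
  rw [Finset.sum_congr rfl (fun i _ => by
    rw [basis_coeff d (by omega) z hinj i])] at h2 <;> try skip
  rw [← h2]
  by_cases h : r = d - 1
  · simp [h]
  · have : d - 1 ≠ r := fun hh => h hh.symm
    simp [h, this]

lemma Hrec (d m : ℕ) (z : Fin (d + 1) → ℂ) :
    Hpoly (d + 1) m z
      = ∑ p ∈ Finset.HasAntidiagonal.antidiagonal m, z 0 ^ p.1 * Hpoly d p.2 (z ∘ Fin.succ) := by
  simp only [Hpoly, Finset.mul_sum]
  rw [Finset.sum_sigma']
  refine Finset.sum_bij' (fun α (_ : α ∈ Finset.Nat.antidiagonalTuple (d+1) m) =>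
      (⟨(α 0, m - α 0), Fin.tail α⟩ : (_ : ℕ × ℕ) × (Fin d → ℕ)))
    (fun p _ => Fin.cons p.1.1 p.2) ?_ ?_ ?_ ?_ ?_
  · intro α hα
    simp only [Finset.Nat.mem_antidiagonalTuple] at hα
    rw [Fin.sum_univ_succ] at hα
    have ht : ∑ i, Fin.tail α i = ∑ i : Fin d, α i.succ := rfl
    simp only [Finset.mem_sigma, Finset.HasAntidiagonal.mem_antidiagonal, Finset.Nat.mem_antidiagonalTuple]
    omega
  · rintro ⟨⟨a, b⟩, α⟩ hp
    simp only [Finset.mem_sigma, Finset.HasAntidiagonal.mem_antidiagonal,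
      Finset.Nat.mem_antidiagonalTuple] at hp ⊢
    rw [Fin.sum_cons]
    omega
  · intro α hα
    exact Fin.cons_self_tail α
  · rintro ⟨⟨a, b⟩, α⟩ hp
    simp only [Finset.mem_sigma, Finset.HasAntidiagonal.mem_antidiagonal,
      Finset.Nat.mem_antidiagonalTuple] at hp
    have hb : m - a = b := by omega
    simp only [Fin.cons_zero, Fin.tail_cons, hb]
  · intro α hα
    rw [Fin.prod_univ_succ]; rfl

lemma prod_erase_succ {M : Type*} [CommMonoid M] (d : ℕ) (f : Fin (d + 1) → M) (i : Fin d) :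
    ∏ j ∈ Finset.univ.erase i.succ, f j = f 0 * ∏ j ∈ Finset.univ.erase i, f j.succ := by
  rw [← Finset.mul_prod_erase _ f
    (show (0 : Fin (d + 1)) ∈ Finset.univ.erase i.succ by
      simp [Finset.mem_erase, (Fin.succ_ne_zero i).symm])]
  congr 1
  rw [show (Finset.univ.erase i.succ).erase (0 : Fin (d + 1))
      = Finset.image Fin.succ (Finset.univ.erase i) from ?_,
    Finset.prod_image (fun a _ b _ h => Fin.succ_injective _ h)]
  ext j
  simp only [Finset.mem_erase, Finset.mem_univ, and_true, Finset.mem_image]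
  constructor
  · rintro ⟨hj0, hjs⟩
    rcases Fin.eq_zero_or_eq_succ j with rfl | ⟨j', rfl⟩
    · exact absurd rfl hj0
    · exact ⟨j', fun h => hjs (by rw [h]), rfl⟩
  · rintro ⟨a, ha, rfl⟩
    exact ⟨Fin.succ_ne_zero a, fun h => ha (Fin.succ_injective _ h)⟩

lemma Wt_succ (d : ℕ) (z : Fin (d + 2) → ℂ) (i : Fin (d + 1)) :
    Wt (d + 2) z i.succ = (z i.succ - z 0)⁻¹ * Wt (d + 1) (z ∘ Fin.succ) i := by
  rw [Wt, Wt, prod_erase_succ]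
  rfl

lemma Hformula (d : ℕ) (z : Fin (d + 1) → ℂ) (hinj : Function.Injective z) (k : ℕ) :
    Hpoly (d + 1) k z = ∑ i, z i ^ (k + d) * Wt (d + 1) z i := by
  induction d generalizing k with
  | zero =>
    simp [Hpoly, Finset.Nat.antidiagonalTuple_one, Wt,
      Finset.sum_singleton, Fin.prod_univ_one]
  | succ e ih =>
    have htinj : Function.Injective (z ∘ Fin.succ) := hinj.comp (Fin.succ_injective _)
    have hz0 : ∀ i : Fin (e + 1), z 0 - z i.succ ≠ 0 := fun i =>
      sub_ne_zero_of_ne fun h => (Fin.succ_ne_zero i) (hinj h).symm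
    rw [Hrec]
    have step1 : ∀ p ∈ Finset.HasAntidiagonal.antidiagonal k,
        z 0 ^ p.1 * Hpoly (e + 1) p.2 (z ∘ Fin.succ)
          = ∑ i : Fin (e + 1), z 0 ^ p.1 *
              (z i.succ ^ p.2 * (z i.succ ^ e * Wt (e + 1) (z ∘ Fin.succ) i)) := by
      intro p _
      rw [ih _ htinj, Finset.mul_sum]
      exact Finset.sum_congr rfl fun i _ => by
        simp only [Function.comp_apply]; rw [pow_add]; ring
    rw [Finset.sum_congr rfl step1, Finset.sum_comm]
    have geom : ∀ i : Fin (e + 1),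
        (∑ p ∈ Finset.HasAntidiagonal.antidiagonal k, z 0 ^ p.1 * z i.succ ^ p.2) * (z 0 - z i.succ)
          = z 0 ^ (k + 1) - z i.succ ^ (k + 1) := by
      intro i
      rw [Finset.Nat.sum_antidiagonal_eq_sum_range_succ_mk]
      have := geom_sum₂_mul (z 0) (z i.succ) (k + 1)
      simpa using this
    have key : ∀ i : Fin (e + 1),
        (∑ p ∈ Finset.HasAntidiagonal.antidiagonal k, z 0 ^ p.1 *
            (z i.succ ^ p.2 * (z i.succ ^ e * Wt (e + 1) (z ∘ Fin.succ) i)))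
          = z i.succ ^ (k + (e + 1)) * Wt (e + 2) z i.succ
            - z 0 ^ (k + 1) * (z i.succ ^ e * Wt (e + 2) z i.succ) := by
      intro i
      have hW' : Wt (e + 1) (z ∘ Fin.succ) i = (z i.succ - z 0) * Wt (e + 2) z i.succ := by
        rw [Wt_succ]
        rw [← mul_assoc, mul_inv_cancel₀ (fun h => hz0 i (by linear_combination -h)), one_mul]
      have hsum : (∑ p ∈ Finset.HasAntidiagonal.antidiagonal k, z 0 ^ p.1 *
            (z i.succ ^ p.2 * (z i.succ ^ e * Wt (e + 1) (z ∘ Fin.succ) i)))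
          = (∑ p ∈ Finset.HasAntidiagonal.antidiagonal k, z 0 ^ p.1 * z i.succ ^ p.2)
              * (z i.succ ^ e * Wt (e + 1) (z ∘ Fin.succ) i) := by
        rw [Finset.sum_mul]
        exact Finset.sum_congr rfl fun p _ => by ring
      rw [hsum, hW']
      have hg' : (∑ p ∈ Finset.HasAntidiagonal.antidiagonal k, z 0 ^ p.1 * z i.succ ^ p.2)
          * (z i.succ - z 0) = z i.succ ^ (k + 1) - z 0 ^ (k + 1) := by
        linear_combination -geom i
      rw [show (∑ p ∈ Finset.HasAntidiagonal.antidiagonal k, z 0 ^ p.1 * z i.succ ^ p.2)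
          * (z i.succ ^ e * ((z i.succ - z 0) * Wt (e + 2) z i.succ))
          = ((∑ p ∈ Finset.HasAntidiagonal.antidiagonal k, z 0 ^ p.1 * z i.succ ^ p.2) * (z i.succ - z 0))
            * (z i.succ ^ e * Wt (e + 2) z i.succ) by ring, hg']
      ring
    rw [Finset.sum_congr rfl fun i _ => key i, Finset.sum_sub_distrib, ← Finset.mul_sum]
    have hs := Slem (e + 2) z hinj e (by omega)
    rw [if_neg (by omega), Fin.sum_univ_succ] at hs
    have hB : ∑ i : Fin (e + 1), z i.succ ^ e * Wt (e + 2) z i.succ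
        = -(z 0 ^ e * Wt (e + 2) z 0) := by linear_combination hs
    rw [hB, show ∑ x : Fin (e + 1 + 1), z x ^ (k + (e + 1)) * Wt (e + 1 + 1) z x
        = z 0 ^ (k + (e + 1)) * Wt (e + 2) z 0
          + ∑ i : Fin (e + 1), z i.succ ^ (k + (e + 1)) * Wt (e + 2) z i.succ
        from Fin.sum_univ_succ _]
    ring

/-- If `z_1,…,z_d` are distinct nonzero complex numbers with equal `n`-th powers
(`n > d ≥ 1`), then `H_{m+n}(z) = z_1^n · H_m(z)` for every `m ≥ 0`. -/
theorem stmt2 (d n : ℕ) (hd : 1 ≤ d) (hn : d < n) (z : Fin d → ℂ)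
    (hinj : Function.Injective z) (hne : ∀ i, z i ≠ 0)
    (hpow : ∀ i j, z i ^ n = z j ^ n) (m : ℕ) :
    Hpoly d (m + n) z = z ⟨0, by omega⟩ ^ n * Hpoly d m z := by
  obtain ⟨e, rfl⟩ : ∃ e, d = e + 1 := ⟨d - 1, by omega⟩
  rw [Hformula _ z hinj, Hformula _ z hinj, Finset.mul_sum]
  refine Finset.sum_congr rfl fun i _ => ?_
  rw [show m + n + e = n + (m + e) by omega, pow_add, hpow i ⟨0, by omega⟩]
  ring
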